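/- (Sharp off-diagonal mass asymptotics; the claim of Example 1 of the paper, refining Theorem 2.1 in the circle case.) Let [α₁,β₁] and [α₂,β₂] be nondegenerate closed intervals in ℝ with β_i − α_i < 2π whose images in ℝ/2πℤ are disjoint. Then lim_{k→∞} ∬_{[α₁,β₁]×[α₂,β₂]} (sin²(k(θ−φ)/2) / sin²((θ−φ)/2)) dθ dφ / (4π²) = (1/(8π²)) ∬_{[α₁,β₁]×[α₂,β₂]} dθ dφ / sin²((θ−φ)/2), and this limit is strictly positive. Equivalently, k·μ_k^Berg(K₁×K₂) converges to this positive constant, where K₁, K₂ are the corresponding arcs of S¹. -/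

import Mathlib

open MeasureTheory Filter

open scoped FourierTransform Topology

set_option maxHeartbeats 1000000

/-- Riemann–Lebesgue: for integrable `g`, `∫ v, cos (k (c - v)) g v → 0` as `k → ∞`. -/
lemma rl_cos (g : ℝ → ℝ) (hg : Integrable g) (c : ℝ) :
    Tendsto (fun k : ℕ => ∫ v : ℝ, Real.cos ((k : ℝ) * (c - v)) * g v) atTop (𝓝 0) := by
  have hπ : (0:ℝ) < Real.pi := Real.pi_pos
  set F : ℝ → ℂ := fun v => (g v : ℂ) with hFdef
  have hF : Integrable F := hg.ofReal
  have h2 : Tendsto (fun k : ℕ => (k : ℝ) / (2 * Real.pi)) atTop (cocompact ℝ) := by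
    rw [cocompact_eq_atBot_atTop]
    exact (tendsto_natCast_atTop_atTop.atTop_div_const (by positivity)).mono_right le_sup_right
  have h3 : Tendsto (fun k : ℕ => ∫ v : ℝ, 𝐞 (-(v * ((k:ℝ)/(2*Real.pi)))) • F v) atTop (𝓝 0) :=
    (Real.tendsto_integral_exp_smul_cocompact F).comp h2
  have h4 : ∀ k : ℕ, (∫ v : ℝ, 𝐞 (-(v * ((k:ℝ)/(2*Real.pi)))) • F v)
      = ∫ v : ℝ, Complex.exp ((-((k:ℝ) * v) : ℝ) * Complex.I) * F v := by
    intro k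
    congr 1
    ext v
    have : 2 * Real.pi * (-(v * ((k:ℝ)/(2*Real.pi)))) = -((k:ℝ)*v) := by
      field_simp
    simp only [Circle.smul_def, Real.fourierChar_apply, this, smul_eq_mul]
  simp_rw [h4] at h3
  -- multiply by exp(k c I)
  have h5 : Tendsto (fun k : ℕ => Complex.exp (((k:ℝ) * c : ℝ) * Complex.I)
      * ∫ v : ℝ, Complex.exp ((-((k:ℝ) * v) : ℝ) * Complex.I) * F v) atTop (𝓝 0) := by
    rw [tendsto_zero_iff_norm_tendsto_zero] at h3 ⊢
    refine h3.congr fun k => ?_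
    rw [norm_mul, Complex.norm_exp_ofReal_mul_I, one_mul]
  have h6 : ∀ k : ℕ, Complex.exp (((k:ℝ) * c : ℝ) * Complex.I)
      * ∫ v : ℝ, Complex.exp ((-((k:ℝ) * v) : ℝ) * Complex.I) * F v
      = ∫ v : ℝ, Complex.exp (((k:ℝ) * (c - v) : ℝ) * Complex.I) * F v := by
    intro k
    rw [← integral_const_mul]
    congr 1
    ext v
    rw [← mul_assoc, ← Complex.exp_add, ← add_mul]
    congr 2
    push_cast
    ring
  replace h5 := h5.congr h6
  have h7 := (Complex.continuous_re.tendsto 0).comp h5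
  have h8 : ∀ k : ℕ, (∫ v : ℝ, Complex.exp (((k:ℝ) * (c - v) : ℝ) * Complex.I) * F v).re
      = ∫ v : ℝ, Real.cos ((k : ℝ) * (c - v)) * g v := by
    intro k
    have hcont : Continuous fun v : ℝ => Complex.exp (((k:ℝ) * (c - v) : ℝ) * Complex.I) := by
      fun_prop
    have hb : ∀ v : ℝ, ‖Complex.exp (((k:ℝ) * (c - v) : ℝ) * Complex.I)‖ ≤ 1 :=
      fun v => le_of_eq (Complex.norm_exp_ofReal_mul_I _)
    have hint : Integrable (fun v : ℝ => Complex.exp (((k:ℝ) * (c - v) : ℝ) * Complex.I) * F v) :=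
      hF.bdd_mul hcont.aestronglyMeasurable (Eventually.of_forall hb)
    have h9 := integral_re hint
    simp only [RCLike.re_to_complex] at h9
    rw [← h9]
    congr 1
    ext v
    simp only [hFdef, Complex.mul_re, Complex.exp_ofReal_mul_I_re, Complex.ofReal_re,
      Complex.ofReal_im, mul_zero, sub_zero]
  simp only [Complex.zero_re] at h7
  exact h7.congr h8

/-- **Sharp off-diagonal mass asymptotics for the circle** (Example 1 of the paper):
for two closed arcs of the circle with disjoint images in `ℝ/2πℤ`,
`k·μ_k^Berg(K₁×K₂)` converges to the strictly positive constant
`(1/(8π²)) ∬ dθ dφ / sin²((θ−φ)/2)`. -/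
theorem offdiagonal_mass_asymptotics_circle
    (α₁ β₁ α₂ β₂ : ℝ)
    (h₁ : α₁ < β₁) (h₂ : α₂ < β₂)
    (hlen₁ : β₁ - α₁ < 2 * Real.pi) (hlen₂ : β₂ - α₂ < 2 * Real.pi)
    (hdisj : ∀ θ ∈ Set.Icc α₁ β₁, ∀ φ ∈ Set.Icc α₂ β₂, ∀ m : ℤ, θ - φ ≠ 2 * Real.pi * m) :
    Tendsto (fun k : ℕ =>
        (1 / (4 * Real.pi ^ 2)) * ∫ θ in Set.Icc α₁ β₁, ∫ φ in Set.Icc α₂ β₂,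
          Real.sin ((k : ℝ) * (θ - φ) / 2) ^ 2 / Real.sin ((θ - φ) / 2) ^ 2)
      atTop
      (nhds ((1 / (8 * Real.pi ^ 2)) * ∫ θ in Set.Icc α₁ β₁, ∫ φ in Set.Icc α₂ β₂,
        1 / Real.sin ((θ - φ) / 2) ^ 2)) ∧
    0 < (1 / (8 * Real.pi ^ 2)) * ∫ θ in Set.Icc α₁ β₁, ∫ φ in Set.Icc α₂ β₂,
        1 / Real.sin ((θ - φ) / 2) ^ 2 := by
  have hπ : (0:ℝ) < Real.pi := Real.pi_pos
  set A : Set ℝ := Set.Icc α₁ β₁ with hA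
  set B : Set ℝ := Set.Icc α₂ β₂ with hB
  have hAc : IsCompact A := isCompact_Icc
  have hBc : IsCompact B := isCompact_Icc
  have hAm : MeasurableSet A := measurableSet_Icc
  have hBm : MeasurableSet B := measurableSet_Icc
  -- the sine never vanishes on A × B
  have hsne : ∀ θ ∈ A, ∀ φ ∈ B, Real.sin ((θ - φ) / 2) ≠ 0 := by
    intro θ hθ φ hφ h0
    obtain ⟨n, hn⟩ := Real.sin_eq_zero_iff.1 h0
    exact hdisj θ hθ φ hφ n (by linarith)
  -- continuity of the kernel on the compact product
  have hHcont : ContinuousOn (fun p : ℝ × ℝ => 1 / Real.sin ((p.1 - p.2) / 2) ^ 2) (A ×ˢ B) := by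
    refine ContinuousOn.div continuousOn_const ?_ ?_
    · exact (Continuous.continuousOn (by fun_prop))
    · intro p hp; exact pow_ne_zero 2 (hsne p.1 hp.1 p.2 hp.2)
  have hKc : IsCompact (A ×ˢ B) := hAc.prod hBc
  have hKne : (A ×ˢ B).Nonempty :=
    ⟨(α₁, α₂), ⟨Set.left_mem_Icc.2 h₁.le, Set.left_mem_Icc.2 h₂.le⟩⟩
  obtain ⟨M, hM⟩ := hKc.exists_bound_of_continuousOn hHcont
  obtain ⟨p₀, hp₀K, hp₀min⟩ := hKc.exists_isMinOn hKne hHcont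
  set m : ℝ := 1 / Real.sin ((p₀.1 - p₀.2) / 2) ^ 2 with hm
  have hmpos : 0 < m := by
    have hne := pow_ne_zero 2 (hsne p₀.1 hp₀K.1 p₀.2 hp₀K.2)
    have := lt_of_le_of_ne (sq_nonneg (Real.sin ((p₀.1 - p₀.2) / 2))) (Ne.symm hne)
    exact one_div_pos.2 this
  have hmle : ∀ θ ∈ A, ∀ φ ∈ B, m ≤ 1 / Real.sin ((θ - φ) / 2) ^ 2 := by
    intro θ hθ φ hφ
    have := isMinOn_iff.1 hp₀min (θ, φ) (Set.mk_mem_prod hθ hφ)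
    simpa [hm] using this
  -- inner integrability
  have hint1 : ∀ θ ∈ A, IntegrableOn (fun φ => 1 / Real.sin ((θ - φ) / 2) ^ 2) B := by
    intro θ hθ
    apply ContinuousOn.integrableOn_compact hBc
    refine ContinuousOn.div continuousOn_const (Continuous.continuousOn (by fun_prop)) ?_
    intro φ hφ; exact pow_ne_zero 2 (hsne θ hθ φ hφ)
  have hint2 : ∀ (k : ℕ), ∀ θ ∈ A, IntegrableOn
      (fun φ => Real.cos ((k:ℝ) * (θ - φ)) * (1 / Real.sin ((θ - φ) / 2) ^ 2)) B := by
    intro k θ hθ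
    apply ContinuousOn.integrableOn_compact hBc
    refine ContinuousOn.mul (Continuous.continuousOn (by fun_prop)) ?_
    refine ContinuousOn.div continuousOn_const (Continuous.continuousOn (by fun_prop)) ?_
    intro φ hφ; exact pow_ne_zero 2 (hsne θ hθ φ hφ)
  -- strong measurability of the partial integrals
  have hsm1 : StronglyMeasurable (fun θ : ℝ => ∫ φ in B, 1 / Real.sin ((θ - φ) / 2) ^ 2) := by
    apply StronglyMeasurable.integral_prod_right (ν := volume.restrict B)
      (f := fun θ φ => 1 / Real.sin ((θ - φ) / 2) ^ 2)
    exact (by fun_prop : Measurable fun p : ℝ × ℝ =>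
      1 / Real.sin ((p.1 - p.2) / 2) ^ 2).stronglyMeasurable
  have hsm2 : ∀ k : ℕ, StronglyMeasurable (fun θ : ℝ =>
      ∫ φ in B, Real.cos ((k:ℝ) * (θ - φ)) * (1 / Real.sin ((θ - φ) / 2) ^ 2)) := by
    intro k
    apply StronglyMeasurable.integral_prod_right (ν := volume.restrict B)
      (f := fun θ φ => Real.cos ((k:ℝ) * (θ - φ)) * (1 / Real.sin ((θ - φ) / 2) ^ 2))
    exact (by fun_prop : Measurable fun p : ℝ × ℝ =>
      Real.cos ((k:ℝ) * (p.1 - p.2)) * (1 / Real.sin ((p.1 - p.2) / 2) ^ 2)).stronglyMeasurable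
  -- bounds on the partial integrals
  have hvolB : volume B < ⊤ := hBc.measure_lt_top
  have hFb : ∀ θ ∈ A, ‖∫ φ in B, 1 / Real.sin ((θ - φ) / 2) ^ 2‖ ≤ M * (volume B).toReal := by
    intro θ hθ
    refine norm_setIntegral_le_of_norm_le_const hvolB (fun φ hφ => ?_)
    exact hM (θ, φ) (Set.mk_mem_prod hθ hφ)
  have hDb : ∀ (k : ℕ), ∀ θ ∈ A,
      ‖∫ φ in B, Real.cos ((k:ℝ) * (θ - φ)) * (1 / Real.sin ((θ - φ) / 2) ^ 2)‖
        ≤ M * (volume B).toReal := by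
    intro k θ hθ
    refine norm_setIntegral_le_of_norm_le_const hvolB (fun φ hφ => ?_)
    have h1 : ‖Real.cos ((k:ℝ) * (θ - φ))‖ ≤ 1 := by
      rw [Real.norm_eq_abs]; exact Real.abs_cos_le_one _
    calc ‖Real.cos ((k:ℝ) * (θ - φ)) * (1 / Real.sin ((θ - φ) / 2) ^ 2)‖
        = ‖Real.cos ((k:ℝ) * (θ - φ))‖ * ‖1 / Real.sin ((θ - φ) / 2) ^ 2‖ := norm_mul _ _
      _ ≤ 1 * ‖1 / Real.sin ((θ - φ) / 2) ^ 2‖ :=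
          mul_le_mul_of_nonneg_right h1 (norm_nonneg _)
      _ = ‖1 / Real.sin ((θ - φ) / 2) ^ 2‖ := one_mul _
      _ ≤ M := hM (θ, φ) (Set.mk_mem_prod hθ hφ)
  -- integrability of the partial integrals over A
  have hconstint : Integrable (fun _ : ℝ => M * (volume B).toReal) (volume.restrict A) :=
    integrableOn_const hAc.measure_lt_top.ne
  have hFint : IntegrableOn (fun θ => ∫ φ in B, 1 / Real.sin ((θ - φ) / 2) ^ 2) A := by
    refine Integrable.mono' hconstint hsm1.aestronglyMeasurable.restrict ?_
    filter_upwards [ae_restrict_mem hAm] with θ hθ using hFb θ hθ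
  have hDint : ∀ k : ℕ, IntegrableOn
      (fun θ => ∫ φ in B, Real.cos ((k:ℝ) * (θ - φ)) * (1 / Real.sin ((θ - φ) / 2) ^ 2)) A := by
    intro k
    refine Integrable.mono' hconstint (hsm2 k).aestronglyMeasurable.restrict ?_
    filter_upwards [ae_restrict_mem hAm] with θ hθ using hDb k θ hθ
  -- pointwise algebraic identity
  have hptwise : ∀ (k : ℕ) (θ φ : ℝ),
      Real.sin ((k:ℝ) * (θ - φ) / 2) ^ 2 / Real.sin ((θ - φ) / 2) ^ 2
        = (1/2) * (1 / Real.sin ((θ - φ) / 2) ^ 2)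
          - (1/2) * (Real.cos ((k:ℝ) * (θ - φ)) * (1 / Real.sin ((θ - φ) / 2) ^ 2)) := by
    intro k θ φ
    have hs : Real.sin ((k:ℝ) * (θ - φ) / 2) ^ 2
        = 1 / 2 - Real.cos ((k:ℝ) * (θ - φ)) / 2 := by
      rw [Real.sin_sq_eq_half_sub, mul_div_cancel₀ _ (two_ne_zero)]
    rw [hs]; ring
  -- decomposition of the double integral
  have hTk : ∀ k : ℕ,
      (∫ θ in A, ∫ φ in B, Real.sin ((k:ℝ) * (θ - φ) / 2) ^ 2 / Real.sin ((θ - φ) / 2) ^ 2)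
        = (1/2) * (∫ θ in A, ∫ φ in B, 1 / Real.sin ((θ - φ) / 2) ^ 2)
          - (1/2) * (∫ θ in A, ∫ φ in B,
              Real.cos ((k:ℝ) * (θ - φ)) * (1 / Real.sin ((θ - φ) / 2) ^ 2)) := by
    intro k
    have step1 : Set.EqOn
        (fun θ => ∫ φ in B, Real.sin ((k:ℝ) * (θ - φ) / 2) ^ 2 / Real.sin ((θ - φ) / 2) ^ 2)
        (fun θ => (1/2) * (∫ φ in B, 1 / Real.sin ((θ - φ) / 2) ^ 2)
          - (1/2) * (∫ φ in B, Real.cos ((k:ℝ) * (θ - φ)) * (1 / Real.sin ((θ - φ) / 2) ^ 2))) A := by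
      intro θ hθ
      simp only
      rw [← integral_const_mul, ← integral_const_mul,
        ← integral_sub ((hint1 θ hθ).const_mul _) ((hint2 k θ hθ).const_mul _)]
      exact setIntegral_congr_fun hBm (fun φ _ => hptwise k θ φ)
    rw [setIntegral_congr_fun hAm step1, integral_sub (hFint.const_mul _) ((hDint k).const_mul _),
      integral_const_mul, integral_const_mul]
  -- the oscillatory part tends to zero
  have hG0 : Tendsto (fun k : ℕ => ∫ θ in A, ∫ φ in B,
      Real.cos ((k:ℝ) * (θ - φ)) * (1 / Real.sin ((θ - φ) / 2) ^ 2)) atTop (𝓝 0) := by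
    have hdc := tendsto_integral_of_dominated_convergence
      (μ := volume.restrict A)
      (F := fun (k : ℕ) (θ : ℝ) =>
        ∫ φ in B, Real.cos ((k:ℝ) * (θ - φ)) * (1 / Real.sin ((θ - φ) / 2) ^ 2))
      (f := fun _ => (0:ℝ))
      (fun _ => M * (volume B).toReal)
      (fun k => (hsm2 k).aestronglyMeasurable.restrict)
      hconstint
      (fun k => by filter_upwards [ae_restrict_mem hAm] with θ hθ using hDb k θ hθ)
      (by
        filter_upwards [ae_restrict_mem hAm] with θ hθ
        set g : ℝ → ℝ := B.indicator (fun φ => 1 / Real.sin ((θ - φ) / 2) ^ 2) with hg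
        have hgint : Integrable g := (integrable_indicator_iff hBm).2 (hint1 θ hθ)
        have := rl_cos g hgint θ
        refine this.congr fun k => ?_
        rw [← integral_indicator hBm]
        congr 1
        ext v
        by_cases hv : v ∈ B <;>
          simp [hg, Set.indicator_of_mem, Set.indicator_of_notMem, hv])
    simpa using hdc
  -- positivity
  have hvolBr : (volume B).toReal = β₂ - α₂ := by
    rw [hB, Real.volume_Icc, ENNReal.toReal_ofReal (by linarith)]
  have hvolAr : (volume A).toReal = β₁ - α₁ := by
    rw [hA, Real.volume_Icc, ENNReal.toReal_ofReal (by linarith)]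
  have hinnerlb : ∀ θ ∈ A, m * (β₂ - α₂) ≤ ∫ φ in B, 1 / Real.sin ((θ - φ) / 2) ^ 2 := by
    intro θ hθ
    have := setIntegral_ge_of_const_le_real hBm hvolB.ne (fun φ hφ => hmle θ hθ φ hφ) (hint1 θ hθ)
    rwa [measureReal_def, hvolBr] at this
  have hFpos : 0 < ∫ θ in A, ∫ φ in B, 1 / Real.sin ((θ - φ) / 2) ^ 2 := by
    have hlb := setIntegral_ge_of_const_le_real hAm hAc.measure_lt_top.ne hinnerlb hFint
    rw [measureReal_def, hvolAr] at hlb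
    have : 0 < m * (β₂ - α₂) * (β₁ - α₁) := by
      apply mul_pos (mul_pos hmpos (by linarith)) (by linarith)
    linarith
  constructor
  · have hlim : Tendsto (fun k : ℕ =>
        (1 / (4 * Real.pi ^ 2)) * ((1/2) * (∫ θ in A, ∫ φ in B, 1 / Real.sin ((θ - φ) / 2) ^ 2)
          - (1/2) * (∫ θ in A, ∫ φ in B,
              Real.cos ((k:ℝ) * (θ - φ)) * (1 / Real.sin ((θ - φ) / 2) ^ 2)))) atTop
        (𝓝 ((1 / (4 * Real.pi ^ 2)) * ((1/2) * (∫ θ in A, ∫ φ in B, 1 / Real.sin ((θ - φ) / 2) ^ 2)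
          - (1/2) * 0))) :=
      tendsto_const_nhds.mul (tendsto_const_nhds.sub (tendsto_const_nhds.mul hG0))
    have heq : (1 / (4 * Real.pi ^ 2)) * ((1/2) * (∫ θ in A, ∫ φ in B, 1 / Real.sin ((θ - φ) / 2) ^ 2)
          - (1/2) * 0)
        = (1 / (8 * Real.pi ^ 2)) * ∫ θ in A, ∫ φ in B, 1 / Real.sin ((θ - φ) / 2) ^ 2 := by
      ring
    rw [heq] at hlim
    refine hlim.congr fun k => ?_
    rw [hTk k]
  · exact mul_pos (by positivity) hFpos
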